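/- Let T be a clique tree of a finite simple graph G, rooted at a node C_r. Then the family {f(C) : C a node of T} is a partition of V_G into nonempty sets; in particular, for every vertex x of G there is exactly one node C of T with x ∈ f(C). -/

import Mathlib

variable {V : Type*}

/-- The closed neighborhood `N[x]` of a vertex. -/
def closedNbhd (G : SimpleGraph V) (x : V) : Set V := insert x (G.neighborSet x)

/-- `N[S] = ⋃ x ∈ S, N[x]`. -/
def closedNbhdSet (G : SimpleGraph V) (S : Set V) : Set V := ⋃ x ∈ S, closedNbhd G x

/-- `D` is a dominating set: `N[D] = V`. -/
def IsDomSet (G : SimpleGraph V) (D : Set V) : Prop := closedNbhdSet G D = Set.univ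

/-- Minimal dominating set: dominating, and no proper subset dominates. -/
def IsMinDomSet (G : SimpleGraph V) (D : Set V) : Prop :=
  IsDomSet G D ∧ ∀ D' : Set V, D' ⊂ D → ¬ IsDomSet G D'

/-- Private neighbors of `x` with respect to `D`: `P(D,x) = {y : N[y] ∩ D = {x}}`. -/
def privNbrs (G : SimpleGraph V) (D : Set V) (x : V) : Set V :=
  {y | closedNbhd G y ∩ D = {x}}

/-- Irredundant set: every member has a private neighbor. -/
def IsIrredundant (G : SimpleGraph V) (D : Set V) : Prop :=
  ∀ x ∈ D, (privNbrs G D x).Nonempty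

/-- Maximal clique. -/
def IsMaxClique (G : SimpleGraph V) (C : Set V) : Prop :=
  G.IsClique C ∧ ∀ D : Set V, G.IsClique D → C ⊆ D → C = D

/-- The type of maximal cliques of `G`. -/
abbrev MaxClique (G : SimpleGraph V) := {C : Set V // IsMaxClique G C}

/-- A clique tree of `G`, rooted at `root`: a rooted tree whose nodes are exactly the
maximal cliques of `G` (encoded by a parent function from which every node reaches the
root), such that for each vertex `x` the nodes containing `x` induce a connected
subtree of the tree. -/
structure CliqueTree (G : SimpleGraph V) where
  parent : MaxClique G → MaxClique G
  root : MaxClique G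
  parent_root : parent root = root
  reaches_root : ∀ C : MaxClique G, ∃ n : ℕ, parent^[n] C = root
  vertex_subtree : ∀ x : V,
    ((SimpleGraph.fromRel fun C C' : MaxClique G => parent C = C').induce
      {C : MaxClique G | x ∈ C.1}).Connected

variable {G : SimpleGraph V}

open Classical in
/-- `f(C) := C ∖ Pa(C)` for non-root `C`, and `f(C_r) := C_r`. -/
noncomputable def fC (T : CliqueTree G) (C : MaxClique G) : Set V :=
  if C = T.root then C.1 else C.1 \ (T.parent C).1

/-- `IsAnc T A B` : `A` is an ancestor of `B` (i.e. `B ⪯ A`), namely `A` lies on the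
path from the root to `B`. -/
def IsAnc (T : CliqueTree G) (A B : MaxClique G) : Prop :=
  ∃ n : ℕ, T.parent^[n] B = A

/-- `V(C) := ⋃_{C' ⪯ C} f(C')`. -/
noncomputable def Vsub (T : CliqueTree G) (C : MaxClique G) : Set V :=
  ⋃ C' ∈ {C' : MaxClique G | IsAnc T C C'}, fC T C'


section Aux
open scoped Classical

/-- Depth of a node: minimal number of parent steps to reach the root. -/
noncomputable def CTdepth (T : CliqueTree G) (C : MaxClique G) : ℕ :=
  Nat.find (T.reaches_root C)

lemma CTdepth_spec (T : CliqueTree G) (C : MaxClique G) :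
    T.parent^[CTdepth T C] C = T.root :=
  Nat.find_spec (T.reaches_root C)

lemma parent_iter_root (T : CliqueTree G) (n : ℕ) : T.parent^[n] T.root = T.root := by
  induction n with
  | zero => rfl
  | succ n ih => rw [Function.iterate_succ_apply, T.parent_root, ih]

lemma CTdepth_parent_lt (T : CliqueTree G) {C : MaxClique G} (h : C ≠ T.root) :
    CTdepth T (T.parent C) < CTdepth T C := by
  have h1 : CTdepth T C ≠ 0 := by
    intro h0
    have hs := CTdepth_spec T C
    rw [h0] at hs
    exact h hs
  obtain ⟨m, hm⟩ := Nat.exists_eq_succ_of_ne_zero h1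
  have hs : T.parent^[m] (T.parent C) = T.root := by
    have := CTdepth_spec T C
    rwa [hm, Function.iterate_succ_apply] at this
  have hle := Nat.find_min' (T.reaches_root (T.parent C)) hs
  calc CTdepth T (T.parent C) ≤ m := hle
    _ < CTdepth T C := by omega

lemma CTdepth_parent_le (T : CliqueTree G) (C : MaxClique G) :
    CTdepth T (T.parent C) ≤ CTdepth T C := by
  by_cases h : C = T.root
  · subst h; rw [T.parent_root]
  · exact (CTdepth_parent_lt T h).le

lemma CTdepth_iter_le (T : CliqueTree G) (C : MaxClique G) (n : ℕ) :
    CTdepth T (T.parent^[n] C) ≤ CTdepth T C := by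
  induction n with
  | zero => exact le_rfl
  | succ n ih =>
      rw [Function.iterate_succ_apply']
      exact (CTdepth_parent_le T _).trans ih

lemma CTdepth_anc_le (T : CliqueTree G) {A B : MaxClique G} (h : IsAnc T A B) :
    CTdepth T A ≤ CTdepth T B := by
  obtain ⟨n, hn⟩ := h
  rw [← hn]
  exact CTdepth_iter_le T B n

lemma anc_antisymm (T : CliqueTree G) {A B : MaxClique G}
    (h1 : IsAnc T A B) (h2 : IsAnc T B A) : A = B := by
  obtain ⟨n, hn⟩ := h1
  match n, hn with
  | 0, hn => exact hn.symm
  | (m+1), hn =>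
    by_cases hB : B = T.root
    · subst hB
      rw [parent_iter_root] at hn
      exact hn.symm
    · exfalso
      have hlt : CTdepth T A < CTdepth T B := by
        rw [Function.iterate_succ_apply] at hn
        calc CTdepth T A = CTdepth T (T.parent^[m] (T.parent B)) := by rw [hn]
          _ ≤ CTdepth T (T.parent B) := CTdepth_iter_le T _ m
          _ < CTdepth T B := CTdepth_parent_lt T hB
      exact absurd (CTdepth_anc_le T h2) (by omega)

lemma parent_eq_self_imp_root (T : CliqueTree G) {C : MaxClique G}
    (h : T.parent C = C) : C = T.root := by
  obtain ⟨n, hn⟩ := T.reaches_root C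
  have key : ∀ m, T.parent^[m] C = C := by
    intro m
    induction m with
    | zero => rfl
    | succ m ih => rw [Function.iterate_succ_apply, h, ih]
  rw [key n] at hn
  exact hn

/-- Every vertex lies in some maximal clique. -/
lemma exists_maxClique_mem [Finite V] (G : SimpleGraph V) (x : V) :
    ∃ C : MaxClique G, x ∈ C.1 := by
  classical
  set s : Set (Set V) := {D | G.IsClique D ∧ x ∈ D} with hs
  have hfin : s.Finite := Set.toFinite s
  have hne : s.Nonempty := ⟨{x}, G.isClique_singleton x, Set.mem_singleton x⟩
  obtain ⟨a, ha, hmax⟩ := Set.Finite.exists_maximalFor id s hfin hne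
  refine ⟨⟨a, ha.1, ?_⟩, ha.2⟩
  intro D hD hsub
  exact Set.Subset.antisymm hsub (hmax ⟨hD, hsub ha.2⟩ hsub)

/-- A maximal clique is nonempty (when `V` is nonempty). -/
lemma maxClique_nonempty [Nonempty V] (C : MaxClique G) : C.1.Nonempty := by
  rcases Set.eq_empty_or_nonempty C.1 with he | hne
  · exfalso
    obtain ⟨x⟩ := ‹Nonempty V›
    have h := C.2.2 {x} (G.isClique_singleton x) (by rw [he]; exact Set.empty_subset _)
    rw [he] at h
    exact (Set.singleton_nonempty x).ne_empty h.symm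
  · exact hne

/-- If `A` contains `x` and `A` is the root or its parent does not contain `x`,
then `A` is an ancestor of every node containing `x`. -/
lemma anc_of_local_min (T : CliqueTree G) {x : V} {A : MaxClique G} (hA : x ∈ A.1)
    (hmin : A = T.root ∨ x ∉ (T.parent A).1) :
    ∀ B : MaxClique G, x ∈ B.1 → IsAnc T A B := by
  intro B hB
  have hconn := (T.vertex_subtree x).preconnected ⟨A, hA⟩ ⟨B, hB⟩
  obtain ⟨p⟩ := hconn
  have key : ∀ (u v : {C : MaxClique G // C ∈ {C : MaxClique G | x ∈ C.1}}),
      ((SimpleGraph.fromRel fun C C' : MaxClique G => T.parent C = C').induce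
        {C : MaxClique G | x ∈ C.1}).Walk u v → IsAnc T A u.1 → IsAnc T A v.1 := by
    intro u v p
    induction p with
    | nil => exact fun h => h
    | @cons u w v hadj p ih =>
        intro hu
        apply ih
        have hadj2 : (SimpleGraph.fromRel
            fun C C' : MaxClique G => T.parent C = C').Adj u.1 w.1 := hadj
        rw [SimpleGraph.fromRel_adj] at hadj2
        rcases hadj2.2 with hpu | hpw
        · obtain ⟨n, hn⟩ := hu
          match n, hn with
          | 0, hn =>
            exfalso
            have huA : (u : MaxClique G) = A := hn
            rcases hmin with hroot | hnp
            · exact hadj2.1 (by rw [huA, hroot, ← hpu, huA, hroot, T.parent_root])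
            · exact hnp (by rw [huA] at hpu; rw [hpu]; exact w.2)
          | (m+1), hn =>
            refine ⟨m, ?_⟩
            rw [Function.iterate_succ_apply, hpu] at hn
            exact hn
        · obtain ⟨n, hn⟩ := hu
          exact ⟨n + 1, by rw [Function.iterate_succ_apply, hpw, hn]⟩
  exact key ⟨A, hA⟩ ⟨B, hB⟩ p ⟨0, rfl⟩

lemma mem_fC_iff (T : CliqueTree G) (C : MaxClique G) (x : V) :
    x ∈ fC T C ↔ x ∈ C.1 ∧ (C = T.root ∨ x ∉ (T.parent C).1) := by
  classical
  unfold fC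
  by_cases h : C = T.root
  · simp [h]
  · simp [h, Set.mem_diff]

lemma fC_unique (T : CliqueTree G) {x : V} {C C' : MaxClique G}
    (h : x ∈ fC T C) (h' : x ∈ fC T C') : C = C' := by
  rw [mem_fC_iff] at h h'
  exact anc_antisymm T (anc_of_local_min T h.1 h.2 C' h'.1)
    (anc_of_local_min T h'.1 h'.2 C h.1)

lemma fC_exists [Finite V] (T : CliqueTree G) (x : V) :
    ∃ C : MaxClique G, x ∈ fC T C := by
  classical
  set S : Set (MaxClique G) := {C | x ∈ C.1} with hS
  have hne : S.Nonempty := exists_maxClique_mem G x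
  obtain ⟨C, hC, hmin⟩ := Set.exists_min_image S (CTdepth T) (Set.toFinite S) hne
  refine ⟨C, (mem_fC_iff T C x).mpr ⟨hC, ?_⟩⟩
  by_cases hroot : C = T.root
  · exact Or.inl hroot
  · refine Or.inr fun hmem => ?_
    have := hmin (T.parent C) hmem
    exact absurd this (by simpa using CTdepth_parent_lt T hroot)

end Aux

/-- The family `{f(C) : C node of the clique tree}` is a partition of `V_G` into
nonempty sets; in particular every vertex lies in `f(C)` for exactly one node `C`. -/
theorem stmt1 {V : Type*} [Fintype V] [Nonempty V] (G : SimpleGraph V)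
    (T : CliqueTree G) :
    (∀ C : MaxClique G, (fC T C).Nonempty) ∧
    (⋃ C : MaxClique G, fC T C) = Set.univ ∧
    (∀ C C' : MaxClique G, C ≠ C' → Disjoint (fC T C) (fC T C')) ∧
    (∀ x : V, ∃! C : MaxClique G, x ∈ fC T C) := by
  refine ⟨?_, ?_, ?_, ?_⟩
  · -- nonemptiness
    intro C
    classical
    unfold fC
    by_cases h : C = T.root
    · rw [if_pos h]; exact maxClique_nonempty C
    · rw [if_neg h]
      rw [Set.diff_nonempty]
      intro hsub
      apply h
      apply parent_eq_self_imp_root T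
      exact Subtype.ext (C.2.2 (T.parent C).1 (T.parent C).2.1 hsub).symm
  · -- covers
    apply Set.eq_univ_of_forall
    intro x
    obtain ⟨C, hC⟩ := fC_exists T x
    exact Set.mem_iUnion.mpr ⟨C, hC⟩
  · -- disjoint
    intro C C' hne
    rw [Set.disjoint_left]
    intro x hx hx'
    exact hne (fC_unique T hx hx')
  · -- unique
    intro x
    obtain ⟨C, hC⟩ := fC_exists T x
    exact ⟨C, hC, fun C' hC' => fC_unique T hC' hC⟩
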